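/- arXiv:1510.07484 — 2 statements merged into one kernel-verified Lean document; each statement's English description precedes it below -/
import Mathlib

section
/- For natural numbers k, n with 0 < k < n, the identity (1/(k+1))·C(n,k)·C(n+1,k) = C(n,k)² − C(n,k−1)·C(n,k+1) holds, where C(n,k) denotes the binomial coefficient. Equivalently, (k+1)·(C(n,k)² − C(n,k−1)·C(n,k+1)) = C(n,k)·C(n+1,k). -/
/-- For `0 < k < n`, `(k+1)·(C(n,k)² − C(n,k−1)·C(n,k+1)) = C(n,k)·C(n+1,k)`,
the denominator-free form of `(1/(k+1))·C(n,k)·C(n+1,k)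
= C(n,k)² − C(n,k−1)·C(n,k+1)`. -/
theorem stmt1 (n k : ℕ) (hk : 0 < k) (hkn : k < n) :
    ((k : ℤ) + 1) *
        ((n.choose k : ℤ) ^ 2 - (n.choose (k - 1) : ℤ) * (n.choose (k + 1) : ℤ))
      = (n.choose k : ℤ) * ((n + 1).choose k : ℤ) := by
  obtain ⟨m, rfl⟩ : ∃ m, k = m + 1 := ⟨k - 1, by omega⟩
  simp only [Nat.add_sub_cancel]
  have hm : m ≤ n := by omega
  have hkn' : m + 1 ≤ n := hkn.le
  have h1 : n.choose (m + 2) * (m + 2) = n.choose (m + 1) * (n - (m + 1)) :=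
    Nat.choose_succ_right_eq n (m + 1)
  have h2 : n.choose (m + 1) * (m + 1) = n.choose m * (n - m) :=
    Nat.choose_succ_right_eq n m
  have h3 : (n + 1).choose (m + 1) = n.choose m + n.choose (m + 1) :=
    Nat.choose_succ_succ n m
  have c1 : ((n.choose (m + 2) : ℤ)) * ((m : ℤ) + 2) =
      (n.choose (m + 1) : ℤ) * ((n : ℤ) - m - 1) := by
    have := congrArg (Nat.cast : ℕ → ℤ) h1
    push_cast [Nat.cast_sub hkn'] at this
    linarith
  have c2 : ((n.choose (m + 1) : ℤ)) * ((m : ℤ) + 1) =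
      (n.choose m : ℤ) * ((n : ℤ) - m) := by
    have := congrArg (Nat.cast : ℕ → ℤ) h2
    push_cast [Nat.cast_sub hm] at this
    linarith
  have c3 : ((n + 1).choose (m + 1) : ℤ) = (n.choose m : ℤ) + (n.choose (m + 1) : ℤ) := by
    exact_mod_cast congrArg (Nat.cast : ℕ → ℤ) h3
  rw [c3]
  push_cast
  linear_combination (n.choose (m+1) : ℤ) * c2 - (n.choose m : ℤ) * c1
end

section
/- For all natural numbers n ≥ 2 and 1 ≤ k ≤ n−1, the determinant C(n,k)·C(n,k) − C(n,k−1)·C(n,k+1) of the 2×2 'diamond' of binomial coefficients is positive; in fact it equals the Narayana number (1/(k+1))·C(n,k)·C(n+1,k) ≥ 1. -/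
/-- For `n ≥ 2` and `1 ≤ k ≤ n−1`, the diamond determinant
`C(n,k)² − C(n,k−1)·C(n,k+1)` is positive, equals the Narayana number
`(1/(k+1))·C(n,k)·C(n+1,k)` (in denominator-free form), and is `≥ 1`. -/
theorem stmt13 (n k : ℕ) (hn : 2 ≤ n) (hk : 1 ≤ k) (hk' : k ≤ n - 1) :
    0 < (n.choose k : ℤ) * n.choose k - n.choose (k - 1) * n.choose (k + 1) ∧
    ((k : ℤ) + 1) *
        ((n.choose k : ℤ) * n.choose k - n.choose (k - 1) * n.choose (k + 1))
      = (n.choose k : ℤ) * ((n + 1).choose k : ℤ) ∧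
    1 ≤ (n.choose k : ℤ) * n.choose k - n.choose (k - 1) * n.choose (k + 1) := by
  have hkm1 : k - 1 + 1 = k := Nat.succ_pred_eq_of_pos hk
  have hkn : k + 1 ≤ n := by omega
  -- basic recurrences
  have h1 : n.choose (k + 1) * (k + 1) = n.choose k * (n - k) :=
    Nat.choose_succ_right_eq n k
  have h2 : n.choose k * k = n.choose (k - 1) * (n - k + 1) := by
    have := Nat.choose_succ_right_eq n (k - 1)
    rw [hkm1] at this
    rw [this]
    congr 1
    omega
  have h3 : (n + 1).choose k = n.choose (k - 1) + n.choose k := by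
    have := Nat.choose_succ_succ n (k - 1)
    simpa [hkm1, Nat.succ_eq_add_one] using this
  have hb : 0 < n.choose k := Nat.choose_pos (by omega)
  have hd : 0 < (n + 1).choose k := Nat.choose_pos (by omega)
  -- cast to ℤ
  have h1' : (n.choose (k + 1) : ℤ) * (k + 1) = n.choose k * ((n : ℤ) - k) := by
    have := congrArg (Nat.cast : ℕ → ℤ) h1
    push_cast [Nat.cast_sub (by omega : k ≤ n)] at this
    linarith
  have h2' : (n.choose k : ℤ) * k = n.choose (k - 1) * ((n : ℤ) - k + 1) := by
    have := congrArg (Nat.cast : ℕ → ℤ) h2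
    push_cast [Nat.cast_sub (by omega : k ≤ n)] at this
    linarith
  have h3' : ((n + 1).choose k : ℤ) = n.choose (k - 1) + n.choose k := by
    exact_mod_cast congrArg (Nat.cast : ℕ → ℤ) h3
  have hb' : (1 : ℤ) ≤ n.choose k := by exact_mod_cast hb
  have hd' : (1 : ℤ) ≤ (n + 1).choose k := by exact_mod_cast hd
  set a : ℤ := (n.choose (k - 1) : ℤ)
  set b : ℤ := (n.choose k : ℤ)
  set c : ℤ := (n.choose (k + 1) : ℤ)
  set d : ℤ := ((n + 1).choose k : ℤ)
  have key : ((k : ℤ) + 1) * (b * b - a * c) = b * d := by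
    linear_combination (-a) * h1' + b * h2' + (-b) * h3'
  have hpos : 0 < b * b - a * c := by
    have hbd : 0 < b * d := mul_pos (by linarith) (by linarith)
    nlinarith [key, hbd, Int.natCast_nonneg k]
  exact ⟨hpos, key, hpos⟩
end
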